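/- Let p ≤ n be positive integers, let G ∈ ℍ^{n×n} be Hermitian positive definite, let X ∈ ℍ^{n×p} satisfy XᴴGX = I_p, and let Y ∈ ℍ^{n×p} be arbitrary. Define Z := Y − X·her(XᴴGY). Then: (i) ZᴴGX + XᴴGZ = 0, and (ii) re(tr(ξᴴG(Y − Z))) = 0 for every ξ ∈ ℍ^{n×p} with ξᴴGX + XᴴGξ = 0. That is, Y ↦ Y − X·her(XᴴGY) is the orthogonal projection onto the tangent space at X with respect to the inner product ⟨ξ,η⟩ = re(tr(ξᴴGη)). -/

import Mathlib

open Matrix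
open scoped Quaternion

lemma quat_re_mul_comm (a b : ℍ[ℝ]) : (a * b).re = (b * a).re := by
  simp [Quaternion.re_mul]; ring

lemma quat_re_sum {α : Type*} (s : Finset α) (f : α → ℍ[ℝ]) :
    (∑ i ∈ s, f i).re = ∑ i ∈ s, (f i).re := by
  induction s using Finset.cons_induction with
  | empty => simp
  | cons a s ha ih => simp [Finset.sum_cons, ih]

lemma re_trace_mul_comm {m k : ℕ} (A : Matrix (Fin m) (Fin k) ℍ[ℝ])
    (B : Matrix (Fin k) (Fin m) ℍ[ℝ]) :
    ((A * B).trace).re = ((B * A).trace).re := by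
  simp only [Matrix.trace, Matrix.diag, Matrix.mul_apply, quat_re_sum]
  rw [Finset.sum_comm]
  exact Finset.sum_congr rfl fun i _ => Finset.sum_congr rfl fun j _ => quat_re_mul_comm _ _

lemma quat_star_real_smul (r : ℝ) (q : ℍ[ℝ]) : star (r • q) = r • star q := by
  ext <;> simp

lemma conjTranspose_real_smul {m k : ℕ} (r : ℝ) (M : Matrix (Fin m) (Fin k) ℍ[ℝ]) :
    (r • M)ᴴ = r • Mᴴ := by
  refine Matrix.ext fun i j => ?_
  simp only [Matrix.conjTranspose_apply, Matrix.smul_apply]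
  exact quat_star_real_smul r (M j i)

/-- Hermitian part of a square quaternionic matrix. -/
noncomputable def her {p : ℕ} (A : Matrix (Fin p) (Fin p) ℍ[ℝ]) : Matrix (Fin p) (Fin p) ℍ[ℝ] :=
  (2⁻¹ : ℝ) • (A + Aᴴ)

/-- When the metric is `⟨ξ,η⟩ = re(tr(ξᴴGη))`, `Z = Y − X·her(XᴴGY)` is the orthogonal
projection of `Y` onto the tangent space at `X` of the generalized quaternionic Stiefel
manifold: `Z` is tangent and `Y − Z` is orthogonal to every tangent vector. -/
theorem projection_generalized_quaternionic_stiefel_G (n p : ℕ) (hp : 0 < p) (hpn : p ≤ n)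
    (G : Matrix (Fin n) (Fin n) ℍ[ℝ]) (hG : Gᴴ = G)
    (hGpd : ∀ x : Fin n → ℍ[ℝ], x ≠ 0 → 0 < (star x ⬝ᵥ G *ᵥ x).re)
    (X : Matrix (Fin n) (Fin p) ℍ[ℝ]) (hX : Xᴴ * G * X = 1)
    (Y : Matrix (Fin n) (Fin p) ℍ[ℝ])
    (Z : Matrix (Fin n) (Fin p) ℍ[ℝ]) (hZ : Z = Y - X * her (Xᴴ * G * Y)) :
    Zᴴ * G * X + Xᴴ * G * Z = 0 ∧
      ∀ ξ : Matrix (Fin n) (Fin p) ℍ[ℝ], ξᴴ * G * X + Xᴴ * G * ξ = 0 →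
        ((ξᴴ * (G * (Y - Z))).trace).re = 0 := by
  set S : Matrix (Fin p) (Fin p) ℍ[ℝ] := her (Xᴴ * G * Y) with hSdef
  have hMH : (Xᴴ * G * Y)ᴴ = Yᴴ * G * X := by
    simp [Matrix.conjTranspose_mul, hG, Matrix.mul_assoc]
  have hMH2 : (Yᴴ * G * X)ᴴ = Xᴴ * G * Y := by
    simp [Matrix.conjTranspose_mul, hG, Matrix.mul_assoc]
  have hSsum : S + Sᴴ = Xᴴ * G * Y + Yᴴ * G * X := by
    rw [hSdef]
    simp only [her, conjTranspose_real_smul, Matrix.conjTranspose_add,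
      Matrix.conjTranspose_conjTranspose, hMH, hMH2]
    rw [← smul_add]
    have h2 : (Xᴴ * G * Y + Yᴴ * G * X) + (Yᴴ * G * X + Xᴴ * G * Y)
        = (2 : ℝ) • (Xᴴ * G * Y + Yᴴ * G * X) := by
      rw [two_smul]; abel
    rw [h2, ← smul_assoc]
    norm_num
  have hYZ : Y - Z = X * S := by rw [hZ]; abel
  constructor
  · have e1 : Zᴴ * G * X = Yᴴ * G * X - Sᴴ * (Xᴴ * G * X) := by
      rw [hZ]
      simp [Matrix.conjTranspose_sub, Matrix.conjTranspose_mul, Matrix.sub_mul, Matrix.mul_assoc]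
    have e2 : Xᴴ * G * Z = Xᴴ * G * Y - (Xᴴ * G * X) * S := by
      rw [hZ]
      simp [Matrix.mul_sub, Matrix.mul_assoc]
    rw [e1, e2, hX, Matrix.one_mul, Matrix.mul_one]
    have : Yᴴ * G * X - Sᴴ + (Xᴴ * G * Y - S)
        = (Xᴴ * G * Y + Yᴴ * G * X) - (S + Sᴴ) := by abel
    rw [this, hSsum, sub_self]
  · intro ξ hξ
    set A : Matrix (Fin p) (Fin p) ℍ[ℝ] := ξᴴ * G * X with hAdef
    have hXGξ : Xᴴ * G * ξ = -A := by
      have := eq_neg_of_add_eq_zero_right hξ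
      rw [this]
    have hA : Aᴴ = -A := by
      rw [hAdef]
      simp only [Matrix.conjTranspose_mul, Matrix.conjTranspose_conjTranspose, hG]
      rw [← Matrix.mul_assoc, hXGξ]
    have hS : Sᴴ = S := by
      rw [hSdef]
      simp only [her, conjTranspose_real_smul, Matrix.conjTranspose_add,
        Matrix.conjTranspose_conjTranspose]
      rw [add_comm]
    have hAS : ξᴴ * (G * (Y - Z)) = A * S := by
      rw [hYZ, hAdef]
      simp [Matrix.mul_assoc]
    rw [hAS]
    have h1 : ((A * S).trace).re = ((Sᴴ * Aᴴ).trace).re := by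
      rw [← Matrix.conjTranspose_mul, Matrix.trace_conjTranspose, Quaternion.re_star]
    have h2 : Sᴴ * Aᴴ = -(S * A) := by rw [hS, hA, Matrix.mul_neg]
    have h3 := re_trace_mul_comm S A
    rw [h2, Matrix.trace_neg] at h1
    simp only [Quaternion.re_neg] at h1
    rw [re_trace_mul_comm A S] at h1 ⊢
    linarith
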